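/- Let M be a symmetric positive semidefinite D×D real matrix and W̃ any D×K real matrix. Then ‖M − W̃W̃ᵀ‖_F² ≥ ∑_{k=K+1}^{D} λ_k(M)², where λ_1 ≥ … ≥ λ_D are the eigenvalues of M. -/

import Mathlib

open Matrix

/-- Squared Frobenius norm of a real matrix. -/
def frobSq {m n : Type*} [Fintype m] [Fintype n] (M : Matrix m n ℝ) : ℝ :=
  ∑ i, ∑ j, (M i j) ^ 2

lemma frobSq_eq_trace {m n : Type*} [Fintype m] [Fintype n] (A : Matrix m n ℝ) :
    frobSq A = Matrix.trace (Aᵀ * A) := by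
  unfold frobSq Matrix.trace
  simp only [Matrix.diag, Matrix.mul_apply, Matrix.transpose_apply, sq]
  exact Finset.sum_comm

lemma frobSq_conj {D : ℕ} (A V : Matrix (Fin D) (Fin D) ℝ)
    (h2 : V * Vᵀ = 1) :
    frobSq (Vᵀ * A * V) = frobSq A := by
  rw [frobSq_eq_trace, frobSq_eq_trace]
  have key : (Vᵀ * A * V)ᵀ * (Vᵀ * A * V) = Vᵀ * (Aᵀ * A) * V := by
    simp only [Matrix.transpose_mul, Matrix.transpose_transpose, Matrix.mul_assoc]
    rw [show V * (Vᵀ * (A * V)) = (V * Vᵀ) * (A * V) by simp only [Matrix.mul_assoc], h2,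
      Matrix.one_mul]
  rw [key, Matrix.trace_mul_cycle, h2, Matrix.one_mul]


lemma sel_lemma {D K : ℕ} (f c : Fin D → ℝ) (hf : Antitone f) (hf0 : ∀ d, 0 ≤ f d)
    (hc0 : ∀ d, 0 ≤ c d) (hc1 : ∀ d, c d ≤ 1) (hcs : ∑ d, c d ≤ (K : ℝ)) :
    ∑ d, f d * c d ≤ ∑ d : Fin D, (if (d : ℕ) < K then f d else 0) := by
  by_cases hKD : D ≤ K
  · have : ∀ d : Fin D, (if (d : ℕ) < K then f d else 0) = f d := fun d => by
      rw [if_pos (lt_of_lt_of_le d.isLt hKD)]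
    rw [Finset.sum_congr rfl fun d _ => this d]
    exact Finset.sum_le_sum fun d _ => by
      nlinarith [hf0 d, hc0 d, hc1 d]
  push_neg at hKD
  set t := f ⟨K, hKD⟩ with ht
  set S : Finset (Fin D) := Finset.univ.filter (fun d : Fin D => (d : ℕ) < K) with hS
  have hScard : S.card = K := by
    have : S = Finset.map (Fin.castLEEmb hKD.le) Finset.univ := by
      ext d
      simp only [hS, Finset.mem_filter, Finset.mem_univ, true_and, Finset.mem_map,
        Fin.castLEEmb, Function.Embedding.coeFn_mk]
      constructor
      · intro h; exact ⟨⟨d, h⟩, by simp [Fin.castLE]⟩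
      · rintro ⟨a, rfl⟩; simpa using a.isLt
    simp [this]
  have ht0 : 0 ≤ t := hf0 _
  have hsplitc := Finset.sum_filter_add_sum_filter_not Finset.univ
    (fun d : Fin D => (d : ℕ) < K) c
  have h1 : ∑ d ∈ Finset.univ.filter (fun d : Fin D => ¬ (d : ℕ) < K), f d * c d
      ≤ t * ((K : ℝ) - ∑ d ∈ S, c d) := by
    calc ∑ d ∈ Finset.univ.filter (fun d : Fin D => ¬ (d : ℕ) < K), f d * c d
        ≤ ∑ d ∈ Finset.univ.filter (fun d : Fin D => ¬ (d : ℕ) < K), t * c d := by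
          refine Finset.sum_le_sum fun d hd => ?_
          simp only [Finset.mem_filter, not_lt] at hd
          exact mul_le_mul_of_nonneg_right (hf (by exact hd.2 : (⟨K, hKD⟩ : Fin D) ≤ d)) (hc0 d)
      _ = t * ∑ d ∈ Finset.univ.filter (fun d : Fin D => ¬ (d : ℕ) < K), c d := by
          rw [Finset.mul_sum]
      _ ≤ t * ((K : ℝ) - ∑ d ∈ S, c d) := by
          apply mul_le_mul_of_nonneg_left _ ht0
          rw [hS]; linarith
  have h2 : t * ((K : ℝ) - ∑ d ∈ S, c d) = ∑ d ∈ S, t * (1 - c d) := by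
    simp only [mul_sub, Finset.sum_sub_distrib, mul_one, Finset.sum_const, hScard,
      nsmul_eq_mul, Finset.mul_sum]
    ring
  have h3 : ∑ d ∈ S, (f d * c d + t * (1 - c d)) ≤ ∑ d ∈ S, f d := by
    refine Finset.sum_le_sum fun d hd => ?_
    simp only [hS, Finset.mem_filter] at hd
    have htf : t ≤ f d := hf (by exact le_of_lt hd.2 : d ≤ (⟨K, hKD⟩ : Fin D))
    nlinarith [hc1 d, hc0 d]
  have hsplitf := Finset.sum_filter_add_sum_filter_not Finset.univ
    (fun d : Fin D => (d : ℕ) < K) (fun d => f d * c d)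
  have hrhs : ∑ d : Fin D, (if (d : ℕ) < K then f d else 0) = ∑ d ∈ S, f d :=
    (Finset.sum_filter _ _).symm
  rw [hrhs]
  have := Finset.sum_add_distrib (s := S) (f := fun d => f d * c d) (g := fun d => t * (1 - c d))
  linarith [h1, h2, h3]

lemma key_diag {D K : ℕ} (lam : Fin D → ℝ) (hmono : Antitone lam) (hpos : ∀ k, 0 ≤ lam k)
    (W : Matrix (Fin D) (Fin K) ℝ) :
    (∑ k : Fin D, if K ≤ (k : ℕ) then (lam k) ^ 2 else 0) ≤ frobSq (Matrix.diagonal lam - W * Wᵀ) := by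
  have hNpsd : (W * Wᵀ).PosSemidef := by
    have := Matrix.posSemidef_self_mul_conjTranspose W
    rwa [Matrix.conjTranspose_eq_transpose_of_trivial] at this
  set N := W * Wᵀ with hNdef
  have hN : N.IsHermitian := hNpsd.1
  set μ : Fin D → ℝ := hN.eigenvalues with hμ
  set U : Matrix (Fin D) (Fin D) ℝ := (hN.eigenvectorUnitary : Matrix (Fin D) (Fin D) ℝ) with hU
  have hμ0 : ∀ i, 0 ≤ μ i := fun i => hNpsd.eigenvalues_nonneg i
  have hspec : N = U * Matrix.diagonal μ * Uᵀ := by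
    have := hN.spectral_theorem
    rwa [Unitary.conjStarAlgAut_apply, Matrix.star_eq_conjTranspose, Matrix.conjTranspose_eq_transpose_of_trivial,
      show (RCLike.ofReal ∘ μ : Fin D → ℝ) = μ from funext fun i => by simp] at this
  have hU1 : U * Uᵀ = 1 := by
    have := (Matrix.mem_unitaryGroup_iff).mp hN.eigenvectorUnitary.2
    rwa [Matrix.star_eq_conjTranspose, Matrix.conjTranspose_eq_transpose_of_trivial] at this
  have hU2 : Uᵀ * U = 1 := mul_eq_one_comm.mp hU1
  -- entrywise orthonormality
  have hrow : ∀ d, ∑ i, (U d i) ^ 2 = 1 := by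
    intro d
    have := congrFun (congrFun hU1 d) d
    simpa [Matrix.mul_apply, Matrix.one_apply, sq] using this
  have hcol : ∀ i, ∑ d, (U d i) ^ 2 = 1 := by
    intro i
    have := congrFun (congrFun hU2 i) i
    simpa [Matrix.mul_apply, Matrix.one_apply, sq] using this
  -- diagonal entries of N
  have hNdd : ∀ d, N d d = ∑ i, μ i * (U d i) ^ 2 := by
    intro d
    conv_lhs => rw [hspec, Matrix.mul_assoc]
    rw [Matrix.mul_apply]
    refine Finset.sum_congr rfl fun i _ => ?_
    rw [Matrix.mul_apply]
    simp only [Matrix.diagonal_apply, Matrix.transpose_apply, ite_mul, zero_mul,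
      Finset.sum_ite_eq, Finset.mem_univ, if_true]
    ring
  -- Frobenius norm of N
  have hNs : Nᵀ = N := by
    rw [← Matrix.conjTranspose_eq_transpose_of_trivial]; exact hN
  have hfrobN : frobSq N = ∑ i, (μ i) ^ 2 := by
    rw [frobSq_eq_trace, hNs]
    calc Matrix.trace (N * N)
        = Matrix.trace (U * (Matrix.diagonal μ * ((Uᵀ * U) * (Matrix.diagonal μ * Uᵀ)))) := by
          conv_lhs => rw [hspec]
          simp only [Matrix.mul_assoc]
      _ = Matrix.trace (U * (Matrix.diagonal μ * (Matrix.diagonal μ * Uᵀ))) := by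
          rw [hU2, Matrix.one_mul]
      _ = Matrix.trace ((Matrix.diagonal μ * Matrix.diagonal μ) * (Uᵀ * U)) := by
          rw [Matrix.trace_mul_comm]
          simp only [Matrix.mul_assoc]
      _ = ∑ i, (μ i) ^ 2 := by
          rw [hU2, Matrix.mul_one, Matrix.diagonal_mul_diagonal, Matrix.trace_diagonal]
          exact Finset.sum_congr rfl fun i _ => (sq (μ i)).symm ▸ rfl
  -- b and s
  set b : Fin D → ℝ := fun i => ∑ d, lam d * (U d i) ^ 2 with hb
  set s : Fin D → ℝ := fun i => ∑ d, (lam d) ^ 2 * (U d i) ^ 2 with hs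
  have hcross : ∑ d, lam d * N d d = ∑ i, μ i * b i := by
    simp only [hNdd, Finset.mul_sum]
    rw [Finset.sum_comm]
    refine Finset.sum_congr rfl fun i _ => ?_
    simp only [hb, Finset.mul_sum]
    exact Finset.sum_congr rfl fun d _ => by ring
  have hCS : ∀ i, (b i) ^ 2 ≤ s i := by
    intro i
    have h := Finset.sum_mul_sq_le_sq_mul_sq Finset.univ (fun d => U d i)
      (fun d => lam d * U d i)
    have e1 : ∑ d, (U d i) * (lam d * U d i) = b i := by
      refine Finset.sum_congr rfl fun d _ => by ring
    have e2 : ∑ d, (lam d * U d i) ^ 2 = s i := by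
      refine Finset.sum_congr rfl fun d _ => by ring
    rw [e1, e2, hcol i, one_mul] at h
    exact h
  -- rank bound
  set T : Finset (Fin D) := Finset.univ.filter (fun i => μ i ≠ 0) with hT
  have hTcard : T.card ≤ K := by
    have h1 : N.rank ≤ K := le_trans (Matrix.rank_mul_le_left W Wᵀ) (Matrix.rank_le_width W)
    have h2 : N.rank = Fintype.card {i // μ i ≠ 0} := hN.rank_eq_card_non_zero_eigs
    have h3 : Fintype.card {i // μ i ≠ 0} = T.card := Fintype.card_subtype _
    omega
  set c : Fin D → ℝ := fun d => ∑ i ∈ T, (U d i) ^ 2 with hc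
  have hc0 : ∀ d, 0 ≤ c d := fun d => Finset.sum_nonneg fun i _ => sq_nonneg _
  have hc1 : ∀ d, c d ≤ 1 := by
    intro d
    rw [← hrow d]
    exact Finset.sum_le_sum_of_subset_of_nonneg (Finset.subset_univ T)
      (fun i _ _ => sq_nonneg _)
  have hcsum : ∑ d, c d ≤ (K : ℝ) := by
    have : ∑ d, c d = T.card := by
      simp only [hc]
      rw [Finset.sum_comm]
      rw [Finset.sum_congr rfl fun i (_ : i ∈ T) => hcol i]
      simp
    rw [this]
    exact_mod_cast hTcard
  have hsT : ∑ i ∈ T, s i = ∑ d, (lam d) ^ 2 * c d := by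
    simp only [hs, hc, Finset.mul_sum]
    exact Finset.sum_comm
  have hsel : ∑ d, (lam d) ^ 2 * c d ≤ ∑ d : Fin D, (if (d : ℕ) < K then (lam d) ^ 2 else 0) :=
    sel_lemma (fun d => (lam d) ^ 2) c
      (fun x y hxy => by simp only []; nlinarith [hmono hxy, hpos y])
      (fun d => sq_nonneg _) hc0 hc1 hcsum
  -- the central inequality
  have hmain : 2 * (∑ i, μ i * b i) - (∑ i, (μ i) ^ 2)
      ≤ ∑ d : Fin D, (if (d : ℕ) < K then (lam d) ^ 2 else 0) := by
    have e : 2 * (∑ i, μ i * b i) - (∑ i, (μ i) ^ 2)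
        = ∑ i, (2 * μ i * b i - (μ i) ^ 2) := by
      rw [Finset.sum_sub_distrib, Finset.mul_sum]
      congr 1
      exact Finset.sum_congr rfl fun i _ => by ring
    rw [e]
    have e2 : ∑ i, (2 * μ i * b i - (μ i) ^ 2)
        = ∑ i ∈ T, (2 * μ i * b i - (μ i) ^ 2) := by
      symm
      apply Finset.sum_filter_of_ne
      intro i _ hne
      intro h0
      apply hne
      rw [h0]; ring
    rw [e2]
    calc ∑ i ∈ T, (2 * μ i * b i - (μ i) ^ 2)
        ≤ ∑ i ∈ T, s i := by
          refine Finset.sum_le_sum fun i _ => ?_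
          have := hCS i
          nlinarith [sq_nonneg (b i - μ i)]
      _ = ∑ d, (lam d) ^ 2 * c d := hsT
      _ ≤ _ := hsel
  -- expansion of frobSq
  have hexp : frobSq (Matrix.diagonal lam - N)
      = (∑ d, (lam d) ^ 2) - 2 * (∑ d, lam d * N d d) + (∑ i, (μ i) ^ 2) := by
    rw [← hfrobN]
    unfold frobSq
    have e1 : ∀ d e : Fin D, ((Matrix.diagonal lam - N) d e) ^ 2
        = (Matrix.diagonal lam d e) ^ 2 - 2 * (Matrix.diagonal lam d e * N d e)
          + (N d e) ^ 2 := by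
      intro d e
      simp only [Matrix.sub_apply]
      ring
    simp only [e1, Finset.sum_add_distrib, Finset.sum_sub_distrib]
    have A1 : ∑ d : Fin D, ∑ e : Fin D, (Matrix.diagonal lam d e) ^ 2 = ∑ d, (lam d) ^ 2 := by
      refine Finset.sum_congr rfl fun d _ => ?_
      simp [Matrix.diagonal_apply, sq, ite_mul, mul_ite, Finset.sum_ite_eq]
    have A2 : ∑ d : Fin D, ∑ e : Fin D, 2 * (Matrix.diagonal lam d e * N d e)
        = 2 * ∑ d, lam d * N d d := by
      rw [Finset.mul_sum]
      refine Finset.sum_congr rfl fun d _ => ?_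
      simp [Matrix.diagonal_apply, ite_mul, mul_ite, Finset.sum_ite_eq]
    rw [A1, A2]
  -- put it together
  have hsplit : (∑ k : Fin D, (lam k) ^ 2)
      = (∑ k : Fin D, if K ≤ (k : ℕ) then (lam k) ^ 2 else 0)
        + (∑ k : Fin D, if (k : ℕ) < K then (lam k) ^ 2 else 0) := by
    rw [← Finset.sum_add_distrib]
    refine Finset.sum_congr rfl fun k _ => ?_
    rcases le_or_gt K (k : ℕ) with h | h
    · rw [if_pos h, if_neg (by omega), add_zero]
    · rw [if_neg (by omega), if_pos h, zero_add]
  rw [hexp]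
  rw [hcross]
  linarith [hmain, hsplit]

theorem stmt_1 {D K : ℕ} (M : Matrix (Fin D) (Fin D) ℝ) (hM : M.PosSemidef)
    (V : Matrix (Fin D) (Fin D) ℝ) (hV : Vᵀ * V = 1)
    (eig : Fin D → ℝ) (heig : Antitone eig)
    (hdecomp : M = V * Matrix.diagonal eig * Vᵀ)
    (W : Matrix (Fin D) (Fin K) ℝ) :
    (∑ k : Fin D, if K ≤ (k : ℕ) then (eig k) ^ 2 else 0) ≤ frobSq (M - W * Wᵀ) := by
  have hVVt : V * Vᵀ = 1 := mul_eq_one_comm.mp hV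
  have hMV : Vᵀ * M * V = Matrix.diagonal eig := by
    rw [hdecomp]
    have : Vᵀ * (V * Matrix.diagonal eig * Vᵀ) * V
        = (Vᵀ * V) * (Matrix.diagonal eig * (Vᵀ * V)) := by
      simp only [Matrix.mul_assoc]
    rw [this, hV, Matrix.one_mul, Matrix.mul_one]
  have heignn : ∀ k, 0 ≤ eig k := by
    have hpsd : (Matrix.diagonal eig).PosSemidef := by
      rw [← hMV]
      have := hM.conjTranspose_mul_mul_same V
      rwa [Matrix.conjTranspose_eq_transpose_of_trivial] at this
    exact Matrix.posSemidef_diagonal_iff.mp hpsd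
  have hconj : Vᵀ * (M - W * Wᵀ) * V = Matrix.diagonal eig - (Vᵀ * W) * (Vᵀ * W)ᵀ := by
    rw [Matrix.mul_sub, Matrix.sub_mul, hMV]
    congr 1
    rw [Matrix.transpose_mul, Matrix.transpose_transpose]
    simp only [Matrix.mul_assoc]
  rw [← frobSq_conj (M - W * Wᵀ) V hVVt, hconj]
  exact key_diag eig heig heignn (Vᵀ * W)
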